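/- Let A have full column rank, x = (AᵀA)^{-1}Aᵀb ≠ 0, r = b − Ax, κ = ‖A‖₂/σ_min(A), v = ‖Ax‖₂/(‖x‖₂σ_min(A)), tan θ = ‖r‖₂/‖Ax‖₂. Define χ_x(A) = (‖A‖₂/‖x‖₂) · max over unit Δx of the nuclear norm of r((AᵀA)^{-1}Δx)ᵀ − A(AᵀA)^{-1}Δx xᵀ. Then κ√((v tan θ)² + 1) ≤ χ_x(A) ≤ κ(v tan θ + 1). -/

import Mathlib

open Matrix BigOperators

/-- Euclidean 2-norm of a vector in `ℝ^n`. -/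
noncomputable def enorm {n : ℕ} (x : Fin n → ℝ) : ℝ := Real.sqrt (∑ i, x i ^ 2)

/-- Frobenius norm of a real matrix. -/
noncomputable def frobNorm {m n : ℕ} (M : Matrix (Fin m) (Fin n) ℝ) : ℝ :=
  Real.sqrt (∑ i, ∑ j, M i j ^ 2)

/-- The singular values of a real `m × n` matrix: square roots of the eigenvalues of `Aᵀ A`
(for real matrices `Aᴴ = Aᵀ`). -/
noncomputable def singVal {m n : ℕ} (A : Matrix (Fin m) (Fin n) ℝ) (i : Fin n) : ℝ :=
  Real.sqrt ((show (Aᵀ * A).IsHermitian by simpa using Matrix.isHermitian_conjTranspose_mul_self A).eigenvalues i)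

/-- Nuclear (trace) norm: the sum of the singular values with multiplicity. -/
noncomputable def nuclearNorm {m n : ℕ} (A : Matrix (Fin m) (Fin n) ℝ) : ℝ :=
  ∑ i, singVal A i

/-- Spectral norm (operator 2-norm): sup of `‖A x‖₂` over Euclidean unit vectors `x`. -/
noncomputable def specNorm {m n : ℕ} (A : Matrix (Fin m) (Fin n) ℝ) : ℝ :=
  sSup {c | ∃ x : Fin n → ℝ, _root_.enorm x = 1 ∧ c = _root_.enorm (A.mulVec x)}

/-- Smallest singular value of a real `m × n` matrix. -/
noncomputable def sigmaMin {m n : ℕ} (A : Matrix (Fin m) (Fin n) ℝ) : ℝ :=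
  Real.sqrt (⨅ i : Fin n, (show (Aᵀ * A).IsHermitian by simpa using Matrix.isHermitian_conjTranspose_mul_self A).eigenvalues i)

-- auxiliary lemmas

lemma aux_sum_eig_eq_trace {k : ℕ} (C : Matrix (Fin k) (Fin k) ℝ) (hC : C.IsHermitian) :
    ∑ i, hC.eigenvalues i = C.trace := by
  nth_rewrite 2 [hC.spectral_theorem]
  rw [Unitary.conjStarAlgAut_apply, Matrix.trace_mul_comm, ← Matrix.mul_assoc, Unitary.coe_star_mul_self, one_mul]
  simp [Matrix.trace_diagonal]

lemma aux_sum_eig_sq_eq_trace {k : ℕ} (C : Matrix (Fin k) (Fin k) ℝ) (hC : C.IsHermitian) :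
    ∑ i, (hC.eigenvalues i)^2 = (C * C).trace := by
  have hCC : C * C = (hC.eigenvectorUnitary : Matrix (Fin k) (Fin k) ℝ) *
        (diagonal (RCLike.ofReal ∘ hC.eigenvalues) * diagonal (RCLike.ofReal ∘ hC.eigenvalues))
      * (star (hC.eigenvectorUnitary : Matrix (Fin k) (Fin k) ℝ)) := by
    conv_lhs => rw [hC.spectral_theorem, Unitary.conjStarAlgAut_apply]
    simp only [Matrix.mul_assoc]
    rw [← Matrix.mul_assoc (star ((hC.eigenvectorUnitary : Matrix (Fin k) (Fin k) ℝ)))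
      ((hC.eigenvectorUnitary : Matrix (Fin k) (Fin k) ℝ)), Unitary.coe_star_mul_self, one_mul]
  rw [hCC, Matrix.trace_mul_comm, ← Matrix.mul_assoc, Unitary.coe_star_mul_self, one_mul,
    Matrix.diagonal_mul_diagonal]
  simp [Matrix.trace_diagonal, sq]

lemma aux_quad_lower {k : ℕ} (C : Matrix (Fin k) (Fin k) ℝ) (hC : C.IsHermitian)
    (u : Fin k → ℝ) : (⨅ i, hC.eigenvalues i) * (u ⬝ᵥ u) ≤ u ⬝ᵥ C.mulVec u := by
  set lam := ⨅ i, hC.eigenvalues i with hlam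
  set U : Matrix (Fin k) (Fin k) ℝ := (hC.eigenvectorUnitary : Matrix (Fin k) (Fin k) ℝ) with hU
  have hUU : U * star U = 1 := (Matrix.mem_unitaryGroup_iff).mp hC.eigenvectorUnitary.2
  have hpsd : (C - lam • (1 : Matrix (Fin k) (Fin k) ℝ)).PosSemidef := by
    have hD : (diagonal (RCLike.ofReal ∘ hC.eigenvalues - fun _ => lam)).PosSemidef := by
      rw [Matrix.posSemidef_diagonal_iff]
      intro i
      have : lam ≤ hC.eigenvalues i := ciInf_le (Set.Finite.bddBelow (Set.finite_range _)) i
      simpa using this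
    have hmm := hD.mul_mul_conjTranspose_same U
    have hsub : U * diagonal (RCLike.ofReal ∘ hC.eigenvalues - fun _ => lam) * Uᴴ
        = C - lam • (1 : Matrix (Fin k) (Fin k) ℝ) := by
      have h2 : lam • (1 : Matrix (Fin k) (Fin k) ℝ) = U * (diagonal fun _ => lam) * star U := by
        rw [← Matrix.smul_one_eq_diagonal, Matrix.mul_smul, Matrix.mul_one, Matrix.smul_mul, hUU]
      nth_rewrite 2 [hC.spectral_theorem]
      rw [h2, Unitary.conjStarAlgAut_apply]
      simp only [Pi.sub_def]
      rw [← Matrix.diagonal_sub]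
      rw [show Uᴴ = star U from rfl]
      rw [Matrix.mul_sub, Matrix.sub_mul]
    rw [← hsub]; exact hmm
  have h0 := hpsd.dotProduct_mulVec_nonneg u
  have hre : star u ⬝ᵥ (C - lam • (1 : Matrix (Fin k) (Fin k) ℝ)).mulVec u
      = u ⬝ᵥ C.mulVec u - lam * (u ⬝ᵥ u) := by
    have : star u = u := by simp
    rw [this, Matrix.sub_mulVec, dotProduct_sub, Matrix.smul_mulVec,
      Matrix.one_mulVec, dotProduct_smul, smul_eq_mul]
  rw [hre] at h0
  linarith

lemma aux_rank_add_le {m n : ℕ} (A B : Matrix (Fin m) (Fin n) ℝ) :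
    (A + B).rank ≤ A.rank + B.rank := by
  rw [Matrix.rank, Matrix.rank, Matrix.rank, Matrix.mulVecLin_add]
  have hle : LinearMap.range (A.mulVecLin + B.mulVecLin) ≤
      LinearMap.range A.mulVecLin ⊔ LinearMap.range B.mulVecLin := by
    rintro _ ⟨x, rfl⟩
    exact Submodule.mem_sup.mpr ⟨A.mulVecLin x, ⟨x, rfl⟩, B.mulVecLin x, ⟨x, rfl⟩, rfl⟩
  exact (Submodule.finrank_mono hle).trans
    (Submodule.finrank_add_le_finrank_add_finrank _ _)

lemma aux_rank_vecMulVec_le {m n : ℕ} (u : Fin m → ℝ) (v : Fin n → ℝ) :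
    (vecMulVec u v).rank ≤ 1 := by
  rw [Matrix.vecMulVec_eq (Fin 1)]
  exact (Matrix.rank_mul_le_right _ _).trans
    ((Matrix.rank_le_card_height _).trans (by simp))

lemma aux_sqrt_sum_le {k : ℕ} (μ : Fin k → ℝ) (h : ∀ i, 0 ≤ μ i) :
    Real.sqrt (∑ i, μ i) ≤ ∑ i, Real.sqrt (μ i) := by
  have h1 : ∑ i, μ i ≤ (∑ i, Real.sqrt (μ i))^2 := by
    calc ∑ i, μ i = ∑ i, (Real.sqrt (μ i))^2 := by
          refine Finset.sum_congr rfl fun i _ => ?_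
          rw [Real.sq_sqrt (h i)]
      _ ≤ (∑ i, Real.sqrt (μ i))^2 :=
          Finset.sum_sq_le_sq_sum_of_nonneg fun i _ => Real.sqrt_nonneg _
  calc Real.sqrt (∑ i, μ i) ≤ Real.sqrt ((∑ i, Real.sqrt (μ i))^2) := Real.sqrt_le_sqrt h1
    _ = ∑ i, Real.sqrt (μ i) :=
        Real.sqrt_sq (Finset.sum_nonneg fun i _ => Real.sqrt_nonneg _)

lemma aux_sum_sqrt_le {k : ℕ} (μ : Fin k → ℝ) (hnn : ∀ i, 0 ≤ μ i)
    (hcard : (Finset.univ.filter fun i => μ i ≠ 0).card ≤ 2) (a b : ℝ)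
    (ha : 0 ≤ a) (hb : 0 ≤ b) (h1 : ∑ i, μ i = a^2 + b^2)
    (h2 : (∑ i, μ i)^2 - ∑ i, (μ i)^2 ≤ 2*(a*b)^2) :
    ∑ i, Real.sqrt (μ i) ≤ a + b := by
  classical
  set s : Finset (Fin k) := Finset.univ.filter fun i => μ i ≠ 0 with hs
  have hres : ∀ f : Fin k → ℝ, (∀ i, μ i = 0 → f i = 0) → ∑ i, f i = ∑ i ∈ s, f i := by
    intro f hf
    refine (Finset.sum_subset (Finset.subset_univ s) fun i _ hi => ?_).symm
    have : μ i = 0 := by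
      by_contra hne
      exact hi (by simp [hs, hne])
    exact hf i this
  have e0 : ∑ i, Real.sqrt (μ i) = ∑ i ∈ s, Real.sqrt (μ i) :=
    hres _ fun i hi => by rw [hi, Real.sqrt_zero]
  have e1 : ∑ i, μ i = ∑ i ∈ s, μ i := hres _ fun i hi => hi
  have e2 : ∑ i, (μ i)^2 = ∑ i ∈ s, (μ i)^2 := hres _ fun i hi => by rw [hi]; ring
  interval_cases h : s.card
  · -- card = 0
    have hse : s = ∅ := Finset.card_eq_zero.mp h
    rw [e0, hse, Finset.sum_empty]
    positivity
  · obtain ⟨p, hp⟩ := Finset.card_eq_one.mp h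
    rw [e0, hp, Finset.sum_singleton]
    have hμp : μ p = a^2 + b^2 := by rw [← h1, e1, hp, Finset.sum_singleton]
    rw [hμp]
    calc Real.sqrt (a^2+b^2) ≤ Real.sqrt ((a+b)^2) := by
          apply Real.sqrt_le_sqrt; nlinarith
      _ = a + b := Real.sqrt_sq (by linarith)
  · obtain ⟨p, q, hpq, hs2⟩ := Finset.card_eq_two.mp h
    rw [e0, hs2, Finset.sum_pair hpq]
    have hsum : μ p + μ q = a^2 + b^2 := by rw [← h1, e1, hs2, Finset.sum_pair hpq]
    have hsq : (μ p)^2 + (μ q)^2 = ∑ i, (μ i)^2 := by rw [e2, hs2, Finset.sum_pair hpq]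
    have hprod : μ p * μ q ≤ (a*b)^2 := by nlinarith [h1, h2, hsum, hsq]
    have hkey : (Real.sqrt (μ p) + Real.sqrt (μ q))^2 ≤ (a+b)^2 := by
      have e3 : (Real.sqrt (μ p) + Real.sqrt (μ q))^2
          = μ p + μ q + 2 * Real.sqrt (μ p * μ q) := by
        rw [add_sq, Real.sq_sqrt (hnn p), Real.sq_sqrt (hnn q), Real.sqrt_mul (hnn p)]
        ring
      have e4 : Real.sqrt (μ p * μ q) ≤ a * b := by
        calc Real.sqrt (μ p * μ q) ≤ Real.sqrt ((a*b)^2) := Real.sqrt_le_sqrt hprod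
          _ = a*b := Real.sqrt_sq (by positivity)
      nlinarith
    calc Real.sqrt (μ p) + Real.sqrt (μ q)
        = Real.sqrt ((Real.sqrt (μ p) + Real.sqrt (μ q))^2) :=
          (Real.sqrt_sq (by positivity)).symm
      _ ≤ Real.sqrt ((a+b)^2) := Real.sqrt_le_sqrt hkey
      _ = a + b := Real.sqrt_sq (by linarith)

lemma aux_vecMulVec_mul {m n p : ℕ} (u : Fin m → ℝ) (v w : Fin n → ℝ) (z : Fin p → ℝ) :
    vecMulVec u v * vecMulVec w z = (v ⬝ᵥ w) • vecMulVec u z := by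
  ext i j
  simp only [Matrix.mul_apply, Matrix.vecMulVec_apply, Matrix.smul_apply, dotProduct, smul_eq_mul]
  rw [Finset.sum_mul]
  exact Finset.sum_congr rfl fun k _ => by ring

lemma aux_trace_vecMulVec {n : ℕ} (u v : Fin n → ℝ) : (vecMulVec u v).trace = u ⬝ᵥ v := by
  simp [Matrix.trace, Matrix.diag, Matrix.vecMulVec_apply, dotProduct]

lemma aux_MtM {m n : ℕ} (r w : Fin m → ℝ) (y x : Fin n → ℝ) (horth : r ⬝ᵥ w = 0) :
    (vecMulVec r y - vecMulVec w x)ᵀ * (vecMulVec r y - vecMulVec w x)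
      = (r ⬝ᵥ r) • vecMulVec y y + (w ⬝ᵥ w) • vecMulVec x x := by
  ext i j
  simp only [Matrix.mul_apply, Matrix.transpose_apply, Matrix.sub_apply, Matrix.vecMulVec_apply,
    Matrix.add_apply, Matrix.smul_apply, smul_eq_mul]
  have key : ∀ k, (r k * y i - w k * x i) * (r k * y j - w k * x j)
      = (r k * r k) * (y i * y j) + (w k * w k) * (x i * x j)
        - (r k * w k) * (y i * x j + y j * x i) := fun k => by ring
  rw [Finset.sum_congr rfl fun k _ => key k, Finset.sum_sub_distrib, Finset.sum_add_distrib,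
    ← Finset.sum_mul, ← Finset.sum_mul, ← Finset.sum_mul]
  have h0 : ∑ k, r k * w k = 0 := horth
  rw [h0, zero_mul, sub_zero]
  simp [dotProduct]

-- _root_.enorm lemmas
lemma enorm_nonneg' {n : ℕ} (v : Fin n → ℝ) : 0 ≤ _root_.enorm v := Real.sqrt_nonneg _

lemma enorm_eq_sqrt_dot {n : ℕ} (v : Fin n → ℝ) : _root_.enorm v = Real.sqrt (v ⬝ᵥ v) := by
  simp [_root_.enorm, dotProduct, sq]

lemma dot_self_nonneg' {n : ℕ} (v : Fin n → ℝ) : 0 ≤ v ⬝ᵥ v :=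
  Finset.sum_nonneg fun i _ => mul_self_nonneg _

lemma dot_self_pos {n : ℕ} (v : Fin n → ℝ) (hv : v ≠ 0) : 0 < v ⬝ᵥ v := by
  rcases (dot_self_nonneg' v).lt_or_eq with h | h
  · exact h
  · exact absurd (dotProduct_self_eq_zero.mp h.symm) hv

lemma enorm_pos'' {n : ℕ} (v : Fin n → ℝ) (hv : v ≠ 0) : 0 < _root_.enorm v := by
  rw [enorm_eq_sqrt_dot]; exact Real.sqrt_pos.mpr (dot_self_pos v hv)

lemma enorm_one_dot {n : ℕ} (v : Fin n → ℝ) (hv : _root_.enorm v = 1) : v ⬝ᵥ v = 1 := by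
  have := congrArg (fun z => z^2) hv
  simp only [_root_.enorm, Real.sq_sqrt (Finset.sum_nonneg fun i _ => sq_nonneg (v i)), one_pow] at this
  simpa [dotProduct, sq] using this


set_option maxHeartbeats 1600000 in
/-- The condition number `χ_x(A)` of the full-column-rank least-squares solution with
respect to `A` (in scaled 2-norms), given as an optimization of nuclear norms of rank-2
matrices, satisfies `κ √((v tan θ)² + 1) ≤ χ_x(A) ≤ κ (v tan θ + 1)` where
`κ = ‖A‖₂/σ_min`, `v = ‖Ax‖₂/(‖x‖₂σ_min)`, `tan θ = ‖r‖₂/‖Ax‖₂`. -/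
theorem condition_number_wrt_A_bounds {m n : ℕ} (A : Matrix (Fin m) (Fin n) ℝ)
    (hrank : A.rank = n) (b : Fin m → ℝ)
    (x : Fin n → ℝ) (hx : x = ((Aᵀ * A)⁻¹ * Aᵀ).mulVec b) (hx0 : x ≠ 0)
    (r : Fin m → ℝ) (hr : r = b - A.mulVec x)
    (κ v t χ : ℝ)
    (hκ : κ = specNorm A / sigmaMin A)
    (hv : v = _root_.enorm (A.mulVec x) / (_root_.enorm x * sigmaMin A))
    (ht : t = _root_.enorm r / _root_.enorm (A.mulVec x))
    (hχ : χ = (specNorm A / _root_.enorm x) *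
        sSup {c | ∃ Δx : Fin n → ℝ, _root_.enorm Δx = 1 ∧
          c = nuclearNorm (vecMulVec r ((Aᵀ * A)⁻¹.mulVec Δx)
                - vecMulVec (A.mulVec ((Aᵀ * A)⁻¹.mulVec Δx)) x)}) :
    κ * Real.sqrt ((v * t) ^ 2 + 1) ≤ χ ∧ χ ≤ κ * (v * t + 1) := by
  classical
  have hC : (Aᵀ * A).IsHermitian := by simpa using Matrix.isHermitian_conjTranspose_mul_self A
  set μ : Fin n → ℝ := hC.eigenvalues with hμdef
  set lam : ℝ := ⨅ i, μ i with hlamdef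
  -- n positive
  have hn : 0 < n := by
    rcases Nat.eq_zero_or_pos n with h | h
    · exfalso; subst h; exact hx0 (funext fun i => i.elim0)
    · exact h
  have : NeZero n := ⟨hn.ne'⟩
  -- eigenvalues positive
  have hpsdC : (Aᵀ * A).PosSemidef := by
    rw [← Matrix.conjTranspose_eq_transpose_of_trivial]
    exact Matrix.posSemidef_conjTranspose_mul_self A
  have hμ0 : ∀ i, 0 ≤ μ i := fun i => hpsdC.eigenvalues_nonneg i
  have hCrank : (Aᵀ * A).rank = n := by rw [Matrix.rank_transpose_mul_self, hrank]
  have hμne : ∀ i, μ i ≠ 0 := by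
    intro i hi
    have h1 := hC.rank_eq_card_non_zero_eigs
    rw [hCrank, ← hμdef] at h1
    have h2 : Fintype.card {j // μ j ≠ 0} < Fintype.card (Fin n) :=
      Fintype.card_subtype_lt (x := i) (by simpa using hi)
    rw [Fintype.card_fin] at h2
    omega
  have hμpos : ∀ i, 0 < μ i := fun i => (hμ0 i).lt_of_ne (Ne.symm (hμne i))
  obtain ⟨i₀, hi₀⟩ := Finite.exists_min μ
  have hlam_eq : lam = μ i₀ :=
    le_antisymm (ciInf_le (Set.Finite.bddBelow (Set.finite_range _)) i₀) (le_ciInf hi₀)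
  have hlam_pos : 0 < lam := hlam_eq ▸ hμpos i₀
  have hslam_pos : 0 < Real.sqrt lam := Real.sqrt_pos.mpr hlam_pos
  -- injectivity / invertibility
  have hAinj : Function.Injective A.mulVec := by
    have hrn : Module.finrank ℝ (LinearMap.range A.mulVecLin) = n := hrank
    have hrk := LinearMap.finrank_range_add_finrank_ker A.mulVecLin
    rw [hrn] at hrk
    have hfin : Module.finrank ℝ (Fin n → ℝ) = n := by simp
    rw [hfin] at hrk
    have hker : LinearMap.ker A.mulVecLin = ⊥ :=
      Submodule.finrank_eq_zero.mp (by omega)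
    exact LinearMap.ker_eq_bot.mp hker
  have hCzero : ∀ z, (Aᵀ * A).mulVec z = 0 → z = 0 := by
    intro z hz
    have h1 : z ⬝ᵥ (Aᵀ * A).mulVec z = A.mulVec z ⬝ᵥ A.mulVec z := by
      rw [← Matrix.mulVec_mulVec, Matrix.dotProduct_mulVec, Matrix.vecMul_transpose]
    rw [hz, dotProduct_zero] at h1
    have h2 : A.mulVec z = 0 := dotProduct_self_eq_zero.mp h1.symm
    exact hAinj (by rw [h2, Matrix.mulVec_zero])
  have hCinj : Function.Injective (Aᵀ * A).mulVec := by
    intro z1 z2 h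
    have := hCzero (z1 - z2) (by rw [Matrix.mulVec_sub, h, sub_self])
    exact sub_eq_zero.mp this
  have hdet : IsUnit (Aᵀ * A).det :=
    (Matrix.isUnit_iff_isUnit_det _).mp (Matrix.mulVec_injective_iff_isUnit.mp hCinj)
  have hinv1 : (Aᵀ * A)⁻¹ * (Aᵀ * A) = 1 := Matrix.nonsing_inv_mul _ hdet
  have hinv2 : (Aᵀ * A) * (Aᵀ * A)⁻¹ = 1 := Matrix.mul_nonsing_inv _ hdet
  -- residual orthogonality
  have hAr : Aᵀ.mulVec r = 0 := by
    rw [hr, Matrix.mulVec_sub, hx, Matrix.mulVec_mulVec, Matrix.mulVec_mulVec,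
      ← Matrix.mul_assoc, hinv2, Matrix.one_mul, sub_self]
  have horthall : ∀ z : Fin n → ℝ, r ⬝ᵥ A.mulVec z = 0 := by
    intro z
    rw [Matrix.dotProduct_mulVec, ← Matrix.mulVec_transpose, hAr, zero_dotProduct]
  -- x nonzero facts
  have hAx0 : A.mulVec x ≠ 0 := fun h => hx0 (hAinj (by rw [h, Matrix.mulVec_zero]))
  have hnx_pos : 0 < _root_.enorm x := enorm_pos'' x hx0
  have hnAx_pos : 0 < _root_.enorm (A.mulVec x) := enorm_pos'' _ hAx0
  have hsp_nonneg : 0 ≤ specNorm A := by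
    apply Real.sSup_nonneg
    rintro c ⟨z, hz, rfl⟩
    exact enorm_nonneg' _

  -- per-direction key estimates
  have key : ∀ Δx : Fin n → ℝ, _root_.enorm Δx = 1 →
      Real.sqrt ((r ⬝ᵥ r) * (((Aᵀ * A)⁻¹.mulVec Δx) ⬝ᵥ ((Aᵀ * A)⁻¹.mulVec Δx))
          + ((A.mulVec ((Aᵀ * A)⁻¹.mulVec Δx)) ⬝ᵥ (A.mulVec ((Aᵀ * A)⁻¹.mulVec Δx))) * (x ⬝ᵥ x))
        ≤ nuclearNorm (vecMulVec r ((Aᵀ * A)⁻¹.mulVec Δx)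
            - vecMulVec (A.mulVec ((Aᵀ * A)⁻¹.mulVec Δx)) x) ∧
      nuclearNorm (vecMulVec r ((Aᵀ * A)⁻¹.mulVec Δx)
            - vecMulVec (A.mulVec ((Aᵀ * A)⁻¹.mulVec Δx)) x)
        ≤ Real.sqrt (r ⬝ᵥ r) / lam + Real.sqrt (x ⬝ᵥ x) / Real.sqrt lam := by
    intro dx hdx
    set y : Fin n → ℝ := (Aᵀ * A)⁻¹.mulVec dx with hydef
    set w : Fin m → ℝ := A.mulVec y with hwdef
    set M : Matrix (Fin m) (Fin n) ℝ := vecMulVec r y - vecMulVec w x with hMdef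
    have hdx1 : dx ⬝ᵥ dx = 1 := enorm_one_dot _ hdx
    have hCy : (Aᵀ * A).mulVec y = dx := by
      rw [hydef, Matrix.mulVec_mulVec, hinv2, Matrix.one_mulVec]
    have hrw0 : r ⬝ᵥ w = 0 := horthall y
    have hMM : Mᵀ * M = (r ⬝ᵥ r) • vecMulVec y y + (w ⬝ᵥ w) • vecMulVec x x :=
      aux_MtM r w y x hrw0
    have hHM : (Mᵀ * M).IsHermitian := by simpa using Matrix.isHermitian_conjTranspose_mul_self M
    set μ' : Fin n → ℝ := hHM.eigenvalues with hμ'def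
    have hpsdM : (Mᵀ * M).PosSemidef := by
      rw [← Matrix.conjTranspose_eq_transpose_of_trivial]
      exact Matrix.posSemidef_conjTranspose_mul_self M
    have hμ'0 : ∀ i, 0 ≤ μ' i := fun i => hpsdM.eigenvalues_nonneg i
    have hNdef : nuclearNorm M = ∑ i, Real.sqrt (μ' i) := rfl
    have hsum1 : ∑ i, μ' i = (r ⬝ᵥ r) * (y ⬝ᵥ y) + (w ⬝ᵥ w) * (x ⬝ᵥ x) := by
      calc ∑ i, μ' i = (Mᵀ * M).trace := aux_sum_eig_eq_trace _ hHM
        _ = _ := by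
          rw [hMM, Matrix.trace_add, Matrix.trace_smul, Matrix.trace_smul,
            aux_trace_vecMulVec, aux_trace_vecMulVec, smul_eq_mul, smul_eq_mul]
    have hsum2 : ∑ i, (μ' i)^2 = (r ⬝ᵥ r)^2 * (y ⬝ᵥ y)^2 + (w ⬝ᵥ w)^2 * (x ⬝ᵥ x)^2
        + 2 * ((r ⬝ᵥ r) * (w ⬝ᵥ w)) * (y ⬝ᵥ x)^2 := by
      calc ∑ i, (μ' i)^2 = (Mᵀ * M * (Mᵀ * M)).trace := aux_sum_eig_sq_eq_trace _ hHM
        _ = _ := by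
          rw [hMM]
          simp only [Matrix.add_mul, Matrix.mul_add, Matrix.smul_mul, Matrix.mul_smul,
            aux_vecMulVec_mul, Matrix.trace_add, Matrix.trace_smul, aux_trace_vecMulVec,
            smul_eq_mul, smul_smul]
          rw [dotProduct_comm x y]
          ring
    have hcard : (Finset.univ.filter fun i => μ' i ≠ 0).card ≤ 2 := by
      have h1 := hHM.rank_eq_card_non_zero_eigs
      rw [Matrix.rank_transpose_mul_self] at h1
      have hM2 : M = vecMulVec r y + vecMulVec (-w) x := by
        ext i j
        simp [hMdef, Matrix.vecMulVec_apply]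
        ring
      have h2 : M.rank ≤ 2 := by
        rw [hM2]
        have g1 := aux_rank_add_le (vecMulVec r y) (vecMulVec (-w) x)
        have g2 := aux_rank_vecMulVec_le r y
        have g3 := aux_rank_vecMulVec_le (-w) x
        omega
      have h3 : (Finset.univ.filter fun i => μ' i ≠ 0).card = M.rank := by
        rw [h1, Fintype.card_subtype]
      omega
    -- lower estimate
    have hLB : Real.sqrt ((r ⬝ᵥ r) * (y ⬝ᵥ y) + (w ⬝ᵥ w) * (x ⬝ᵥ x)) ≤ nuclearNorm M := by
      rw [hNdef, ← hsum1]
      exact aux_sqrt_sum_le μ' hμ'0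
    -- upper estimate
    have hrr : 0 ≤ r ⬝ᵥ r := dot_self_nonneg' r
    have hww : 0 ≤ w ⬝ᵥ w := dot_self_nonneg' w
    have hyy : 0 ≤ y ⬝ᵥ y := dot_self_nonneg' y
    have hxx : 0 ≤ x ⬝ᵥ x := dot_self_nonneg' x
    have hUB : nuclearNorm M ≤ Real.sqrt ((r ⬝ᵥ r) * (y ⬝ᵥ y))
        + Real.sqrt ((w ⬝ᵥ w) * (x ⬝ᵥ x)) := by
      rw [hNdef]
      apply aux_sum_sqrt_le μ' hμ'0 hcard _ _ (Real.sqrt_nonneg _) (Real.sqrt_nonneg _)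
      · rw [Real.sq_sqrt (mul_nonneg hrr hyy), Real.sq_sqrt (mul_nonneg hww hxx)]
        exact hsum1
      · have heq : 2 * (Real.sqrt ((r ⬝ᵥ r) * (y ⬝ᵥ y)) * Real.sqrt ((w ⬝ᵥ w) * (x ⬝ᵥ x)))^2
            = 2 * (((r ⬝ᵥ r) * (y ⬝ᵥ y)) * ((w ⬝ᵥ w) * (x ⬝ᵥ x))) := by
          rw [mul_pow, Real.sq_sqrt (mul_nonneg hrr hyy), Real.sq_sqrt (mul_nonneg hww hxx)]
        rw [heq, hsum1, hsum2]
        nlinarith [sq_nonneg (y ⬝ᵥ x), mul_nonneg hrr hww]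
    -- norm bounds on y and w
    have hwwy : w ⬝ᵥ w = y ⬝ᵥ dx := by
      have h1 : y ⬝ᵥ (Aᵀ * A).mulVec y = w ⬝ᵥ w := by
        rw [← Matrix.mulVec_mulVec, Matrix.dotProduct_mulVec, Matrix.vecMul_transpose]
      rw [← h1, hCy]
    have hquad : lam * (y ⬝ᵥ y) ≤ w ⬝ᵥ w := by
      have h1 : y ⬝ᵥ (Aᵀ * A).mulVec y = w ⬝ᵥ w := by
        rw [← Matrix.mulVec_mulVec, Matrix.dotProduct_mulVec, Matrix.vecMul_transpose]
      rw [← h1]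
      exact aux_quad_lower (Aᵀ * A) hC y
    have hCS : (y ⬝ᵥ dx)^2 ≤ (y ⬝ᵥ y) * (dx ⬝ᵥ dx) := by
      have h1 := Finset.sum_mul_sq_le_sq_mul_sq Finset.univ y dx
      simpa [dotProduct, sq] using h1
    have hwwle : w ⬝ᵥ w ≤ 1 / lam := by
      have h2 : (w ⬝ᵥ w)^2 ≤ y ⬝ᵥ y := by
        rw [hwwy]
        calc (y ⬝ᵥ dx)^2 ≤ (y ⬝ᵥ y) * (dx ⬝ᵥ dx) := hCS
          _ = y ⬝ᵥ y := by rw [hdx1, mul_one]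
      have h3 : lam * (w ⬝ᵥ w)^2 ≤ w ⬝ᵥ w :=
        le_trans (by nlinarith [h2, hlam_pos]) hquad
      rcases eq_or_lt_of_le hww with h0 | h0
      · rw [← h0]; positivity
      · rw [le_div_iff₀ hlam_pos]
        nlinarith [h3, h0, hlam_pos]
    have hyyle : y ⬝ᵥ y ≤ 1 / lam^2 := by
      have h4 : lam * (lam * (y ⬝ᵥ y)) ≤ lam * (w ⬝ᵥ w) :=
        mul_le_mul_of_nonneg_left hquad hlam_pos.le
      have h5 : (w ⬝ᵥ w) * lam ≤ 1 := (le_div_iff₀ hlam_pos).mp hwwle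
      rw [le_div_iff₀ (by positivity : (0:ℝ) < lam^2)]
      nlinarith [h4, h5, hlam_pos]
    constructor
    · exact hLB
    · refine hUB.trans (add_le_add ?_ ?_)
      · calc Real.sqrt ((r ⬝ᵥ r) * (y ⬝ᵥ y)) ≤ Real.sqrt ((r ⬝ᵥ r) * (1 / lam^2)) :=
              Real.sqrt_le_sqrt (by nlinarith)
          _ = Real.sqrt (r ⬝ᵥ r) / lam := by
            rw [Real.sqrt_mul hrr, show (1:ℝ)/lam^2 = (1/lam)^2 by ring,
              Real.sqrt_sq (by positivity), ← div_eq_mul_one_div]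
      · calc Real.sqrt ((w ⬝ᵥ w) * (x ⬝ᵥ x)) ≤ Real.sqrt ((1/lam) * (x ⬝ᵥ x)) :=
              Real.sqrt_le_sqrt (by nlinarith)
          _ = Real.sqrt (x ⬝ᵥ x) / Real.sqrt lam := by
            rw [Real.sqrt_mul (by positivity), one_div, Real.sqrt_inv, inv_mul_eq_div]
  -- the sup set and its bounds
  set Sset : Set ℝ := {c | ∃ Δx : Fin n → ℝ, _root_.enorm Δx = 1 ∧
      c = nuclearNorm (vecMulVec r ((Aᵀ * A)⁻¹.mulVec Δx)
            - vecMulVec (A.mulVec ((Aᵀ * A)⁻¹.mulVec Δx)) x)} with hSset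
  set K : ℝ := Real.sqrt (r ⬝ᵥ r) / lam + Real.sqrt (x ⬝ᵥ x) / Real.sqrt lam with hKdef
  have hbdd : BddAbove Sset := by
    refine ⟨K, ?_⟩
    rintro c ⟨dx, hdx, rfl⟩
    exact (key dx hdx).2
  have hne : Sset.Nonempty := by
    refine ⟨_, ⟨Pi.single (⟨0, hn⟩ : Fin n) 1, ?_, rfl⟩⟩
    simp [_root_.enorm, Pi.single_apply]
  have hS_le : sSup Sset ≤ K := csSup_le hne (by rintro c ⟨dx, hdx, rfl⟩; exact (key dx hdx).2)
  -- lower bound witness from the minimal eigenvector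
  have henu0 : _root_.enorm ⇑(hC.eigenvectorBasis i₀) = 1 := by
    have h1 : ‖hC.eigenvectorBasis i₀‖ = 1 := hC.eigenvectorBasis.orthonormal.1 i₀
    have h2 := EuclideanSpace.norm_eq (hC.eigenvectorBasis i₀)
    rw [h2] at h1
    rw [_root_.enorm, ← h1]
    congr 1
    refine Finset.sum_congr rfl fun i _ => ?_
    simp [Real.norm_eq_abs, sq_abs]
  set u : Fin n → ℝ := ⇑(hC.eigenvectorBasis i₀) with hudef
  have henu : _root_.enorm u = 1 := henu0
  have huu : u ⬝ᵥ u = 1 := enorm_one_dot _ henu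
  have heig : (Aᵀ * A).mulVec u = lam • u := by
    rw [hudef, hC.mulVec_eigenvectorBasis i₀, ← hμdef, ← hlam_eq]
  have hy0 : (Aᵀ * A)⁻¹.mulVec u = lam⁻¹ • u := by
    have h1 : (Aᵀ * A).mulVec (lam⁻¹ • u) = u := by
      rw [Matrix.mulVec_smul, heig, smul_smul, inv_mul_cancel₀ hlam_pos.ne', one_smul]
    calc (Aᵀ * A)⁻¹.mulVec u = (Aᵀ * A)⁻¹.mulVec ((Aᵀ * A).mulVec (lam⁻¹ • u)) := by rw [h1]
      _ = ((Aᵀ * A)⁻¹ * (Aᵀ * A)).mulVec (lam⁻¹ • u) := Matrix.mulVec_mulVec _ _ _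
      _ = lam⁻¹ • u := by rw [hinv1, Matrix.one_mulVec]
  have hyy0 : ((Aᵀ * A)⁻¹.mulVec u) ⬝ᵥ ((Aᵀ * A)⁻¹.mulVec u) = 1 / lam^2 := by
    rw [hy0, smul_dotProduct, dotProduct_smul, huu, smul_eq_mul, smul_eq_mul]
    field_simp
  have hww0 : (A.mulVec ((Aᵀ * A)⁻¹.mulVec u)) ⬝ᵥ (A.mulVec ((Aᵀ * A)⁻¹.mulVec u)) = 1 / lam := by
    have h1 : ((Aᵀ * A)⁻¹.mulVec u) ⬝ᵥ (Aᵀ * A).mulVec ((Aᵀ * A)⁻¹.mulVec u)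
        = (A.mulVec ((Aᵀ * A)⁻¹.mulVec u)) ⬝ᵥ (A.mulVec ((Aᵀ * A)⁻¹.mulVec u)) := by
      rw [← Matrix.mulVec_mulVec, Matrix.dotProduct_mulVec, Matrix.vecMul_transpose]
    rw [← h1, Matrix.mulVec_mulVec, hinv2, Matrix.one_mulVec, hy0, smul_dotProduct,
      huu, smul_eq_mul, mul_one, one_div]
  set T : ℝ := (r ⬝ᵥ r) * (1/lam^2) + (1/lam) * (x ⬝ᵥ x) with hTdef
  have hT0 : 0 ≤ T := by
    have := dot_self_nonneg' r; have := dot_self_nonneg' x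
    positivity
  have hSlow : Real.sqrt T ≤ sSup Sset := by
    have hmem : nuclearNorm (vecMulVec r ((Aᵀ * A)⁻¹.mulVec u)
        - vecMulVec (A.mulVec ((Aᵀ * A)⁻¹.mulVec u)) x) ∈ Sset := ⟨u, henu, rfl⟩
    have h1 := (key u henu).1
    rw [hyy0, hww0] at h1
    exact h1.trans (le_csSup hbdd hmem)
  -- final numeric reductions
  have hσ : sigmaMin A = Real.sqrt lam := rfl
  have hnr : _root_.enorm r = Real.sqrt (r ⬝ᵥ r) := enorm_eq_sqrt_dot r
  have hnx : _root_.enorm x = Real.sqrt (x ⬝ᵥ x) := enorm_eq_sqrt_dot x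
  have hxx_pos : 0 < x ⬝ᵥ x := dot_self_pos x hx0
  have hx2 : (_root_.enorm x)^2 = x ⬝ᵥ x := by rw [hnx, Real.sq_sqrt hxx_pos.le]
  have hr2 : (_root_.enorm r)^2 = r ⬝ᵥ r := by rw [hnr, Real.sq_sqrt (dot_self_nonneg' r)]
  have hvt : v * t = _root_.enorm r / (_root_.enorm x * Real.sqrt lam) := by
    rw [hv, ht, hσ]
    field_simp
  rw [hκ, hχ, hσ, hvt]
  have e1 : (_root_.enorm r / (_root_.enorm x * Real.sqrt lam))^2 + 1 = T * (lam / (x ⬝ᵥ x)) := by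
    rw [hTdef, div_pow, mul_pow, Real.sq_sqrt hlam_pos.le, hx2, hr2]
    field_simp
  have e2 : Real.sqrt ((_root_.enorm r / (_root_.enorm x * Real.sqrt lam))^2 + 1)
      = Real.sqrt T * Real.sqrt lam / _root_.enorm x := by
    rw [e1, Real.sqrt_mul hT0, Real.sqrt_div hlam_pos.le, ← hnx, mul_div_assoc]
  constructor
  · -- lower bound
    rw [e2]
    have e3 : specNorm A / Real.sqrt lam * (Real.sqrt T * Real.sqrt lam / _root_.enorm x)
        = specNorm A / _root_.enorm x * Real.sqrt T := by
      field_simp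
    rw [e3]
    exact mul_le_mul_of_nonneg_left hSlow (by positivity)
  · -- upper bound
    have e4 : specNorm A / Real.sqrt lam * (_root_.enorm r / (_root_.enorm x * Real.sqrt lam) + 1)
        = specNorm A / _root_.enorm x * K := by
      rw [hKdef, ← hnr, ← hnx]
      have hs : Real.sqrt lam * Real.sqrt lam = lam := Real.mul_self_sqrt hlam_pos.le
      field_simp
      linear_combination (-(specNorm A * _root_.enorm r)) * hs
    rw [e4]
    exact mul_le_mul_of_nonneg_left hS_le (by positivity)
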